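/- For n ≥ 4: if n is even then AI((Maj,rev)-MM_n) ≥ ⌈n/4⌉, and if n is odd then AI((Maj,rev)-MM_n) ≥ ⌈(n−1)/4⌉. -/

import Mathlib

abbrev BF (n : ℕ) := (Fin n → ZMod 2) → ZMod 2

/-- Hamming weight of a vector in `F₂ⁿ`. -/
def wtv {n : ℕ} (x : Fin n → ZMod 2) : ℕ :=
  (Finset.univ.filter fun i => x i = 1).card

/-- ANF coefficient `a_α = ⊕_{z ≤ α} f(z)`. -/
def anf {n : ℕ} (f : BF n) (α : Fin n → ZMod 2) : ZMod 2 :=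
  ∑ z ∈ Finset.univ.filter (fun z : Fin n → ZMod 2 => ∀ i, z i = 1 → α i = 1), f z

/-- Algebraic degree: the maximum weight of `α` with nonzero ANF coefficient
(0 for the zero function). -/
def degBF {n : ℕ} (f : BF n) : ℕ :=
  (Finset.univ.filter fun α => anf f α ≠ 0).sup wtv

/-- Algebraic immunity: minimum degree of a nonzero annihilator of `f` or of `1 ⊕ f`. -/
noncomputable def AI {n : ℕ} (f : BF n) : ℕ :=
  sInf {d : ℕ | ∃ g : BF n, g ≠ 0 ∧ degBF g = d ∧
    ((∀ x, g x * f x = 0) ∨ (∀ x, g x * (1 + f x) = 0))}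

/-- Inner product over F₂. -/
def ip {m : ℕ} (x y : Fin m → ZMod 2) : ZMod 2 := ∑ i, x i * y i

/-- The m-variable majority function: 1 iff the weight exceeds ⌊m/2⌋. -/
def majF (m : ℕ) : BF m := fun x => if m / 2 < wtv x then 1 else 0

/-- The bit reversal permutation of F₂^m. -/
def revPerm (m : ℕ) : (Fin m → ZMod 2) → (Fin m → ZMod 2) := fun x i => x i.rev

/-- (Maj,rev)-MM_{2m}(X,Y) = ⟨rev(X),Y⟩ ⊕ Maj_m(X) on 2m variables. -/
def MMrevEven (m : ℕ) : BF (m + m) :=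
  fun u => ip (revPerm m fun i => u (Fin.castAdd m i)) (fun i => u (Fin.natAdd m i))
    + majF m (fun i => u (Fin.castAdd m i))

/-- (Maj,rev)-MM_{2m+1}(W,X,Y) = W ⊕ (Maj,rev)-MM_{2m}(X,Y) on 2m+1 variables. -/
def MMrevOdd (m : ℕ) : BF (m + m + 1) :=
  fun u => u (Fin.last (m + m)) + MMrevEven m (fun i => u i.castSucc)

-- base layer
lemma z2em (a : ZMod 2) : a = 0 ∨ a = 1 := by revert a; decide

lemma z2add (a : ZMod 2) : a + a = 0 := by revert a; decide

lemma z2ne (a : ZMod 2) (h : a ≠ 1) : a = 0 := by revert a; decide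

lemma z2ne' (a : ZMod 2) (h : a ≠ 0) : a = 1 := by revert a; decide

lemma z2flip (a : ZMod 2) : a + 1 ≠ a := by revert a; decide

lemma z2addr (a : ZMod 2) : a + 1 + 1 = a := by revert a; decide

lemma flip_flip' {n : ℕ} (a : Fin n → ZMod 2) (j : Fin n) :
    Function.update (Function.update a j (a j + 1)) j (Function.update a j (a j + 1) j + 1) = a := by
  funext i
  by_cases hij : i = j
  · subst hij
    simp only [Function.update_self]
    exact z2addr _
  · simp [Function.update_of_ne hij]

lemma sum_flip {n : ℕ} (s : Finset (Fin n → ZMod 2)) (f : (Fin n → ZMod 2) → ZMod 2) (j : Fin n)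
    (hs : ∀ z ∈ s, Function.update z j (z j + 1) ∈ s)
    (hf : ∀ z ∈ s, f (Function.update z j (z j + 1)) = f z) :
    ∑ z ∈ s, f z = 0 := by
  apply Finset.sum_involution (fun z _ => Function.update z j (z j + 1))
    (fun a ha => by rw [hf a ha]; exact z2add _)
    (fun a ha _ h => by
      have := congrFun h j
      simp only [Function.update_self] at this
      exact z2flip _ this)
    (fun a ha => hs a ha)
    (fun a ha => flip_flip' a j)

lemma wtv_le_of_vle {n : ℕ} {z α : Fin n → ZMod 2} (h : ∀ i, z i = 1 → α i = 1) :
    wtv z ≤ wtv α := by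
  apply Finset.card_le_card
  intro i hi
  simp only [Finset.mem_filter, Finset.mem_univ, true_and] at *
  exact h i hi

lemma vle_eq_of_wtv {n : ℕ} {z α : Fin n → ZMod 2} (h : ∀ i, z i = 1 → α i = 1)
    (hw : wtv α ≤ wtv z) : z = α := by
  have hsub : (Finset.univ.filter fun i => z i = 1) ⊆ (Finset.univ.filter fun i => α i = 1) := by
    intro i hi; simp only [Finset.mem_filter, Finset.mem_univ, true_and] at *; exact h i hi
  have heq := Finset.eq_of_subset_of_card_le hsub hw
  funext i
  rcases z2em (α i) with ha | ha
  · rcases z2em (z i) with hz | hz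
    · rw [ha, hz]
    · exact absurd (h i hz) (by rw [ha]; decide)
  · have : i ∈ (Finset.univ.filter fun i => z i = 1) := by
      rw [heq]; simp [ha]
    simp only [Finset.mem_filter, Finset.mem_univ, true_and] at this
    rw [this, ha]

lemma exists_diff {n : ℕ} {z α : Fin n → ZMod 2} (h : ∀ i, z i = 1 → α i = 1)
    (hne : z ≠ α) : ∃ j, α j = 1 ∧ z j = 0 := by
  by_contra hc
  push_neg at hc
  apply hne
  funext i
  rcases z2em (z i) with hz | hz
  · rcases z2em (α i) with ha | ha
    · rw [ha, hz]
    · exact absurd hz (hc i ha)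
  · rw [hz, h i hz]

-- Möbius / evaluation layer
lemma eval_eq_sum_anf {n : ℕ} (g : BF n) (x : Fin n → ZMod 2) :
    ∑ α ∈ Finset.univ.filter (fun α : Fin n → ZMod 2 => ∀ i, α i = 1 → x i = 1), anf g α
      = g x := by
  unfold anf
  have step1 : ∀ α ∈ Finset.univ.filter (fun α : Fin n → ZMod 2 => ∀ i, α i = 1 → x i = 1),
      (∑ z ∈ Finset.univ.filter (fun z : Fin n → ZMod 2 => ∀ i, z i = 1 → α i = 1), g z)
      = ∑ z ∈ Finset.univ.filter (fun z : Fin n → ZMod 2 => ∀ i, z i = 1 → x i = 1),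
          (if (∀ i, z i = 1 → α i = 1) then g z else 0) := by
    intro α hα
    simp only [Finset.mem_filter, Finset.mem_univ, true_and] at hα
    rw [Finset.sum_ite, Finset.sum_const_zero, add_zero]
    apply Finset.sum_congr
    · ext z
      simp only [Finset.mem_filter, Finset.mem_univ, true_and]
      exact ⟨fun hz => ⟨fun i hi => hα i (hz i hi), hz⟩, fun hz => hz.2⟩
    · intros; rfl
  rw [Finset.sum_congr rfl step1, Finset.sum_comm]
  rw [Finset.sum_eq_single_of_mem x (by simp)]
  · rw [Finset.sum_eq_single_of_mem x (by simp)]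
    · simp
    · intro α hα hne
      simp only [Finset.mem_filter, Finset.mem_univ, true_and] at hα
      rw [if_neg]
      intro hxα
      exact hne (vle_eq_of_wtv hα (wtv_le_of_vle hxα))
  · intro z hz hne
    simp only [Finset.mem_filter, Finset.mem_univ, true_and] at hz
    obtain ⟨j, hxj, hzj⟩ := exists_diff hz hne
    apply sum_flip _ _ j
    · intro α hα
      simp only [Finset.mem_filter, Finset.mem_univ, true_and] at hα ⊢
      intro i hi
      by_cases hij : i = j
      · subst hij; exact hxj
      · exact hα i (by rwa [Function.update_of_ne hij] at hi)
    · intro α hα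
      congr 1
      apply propext
      constructor
      · intro hv i hi
        have := hv i hi
        by_cases hij : i = j
        · subst hij; rw [hzj] at hi; exact absurd hi (by decide)
        · rwa [Function.update_of_ne hij] at this
      · intro hv i hi
        by_cases hij : i = j
        · subst hij; rw [hzj] at hi; exact absurd hi (by decide)
        · rw [Function.update_of_ne hij]; exact hv i hi

lemma zero_of_anf {n : ℕ} (g : BF n) (h : ∀ α, anf g α = 0) : g = 0 := by
  funext x
  rw [← eval_eq_sum_anf g x]
  simp [h]

lemma anf_eq_zero_of_deg {n : ℕ} (g : BF n) (α : Fin n → ZMod 2) (h : degBF g < wtv α) :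
    anf g α = 0 := by
  by_contra hc
  exact absurd (Finset.le_sup (f := wtv) (by simp [hc]) : wtv α ≤ degBF g) (not_le.2 h)

def mon {n : ℕ} (γ x : Fin n → ZMod 2) : ZMod 2 := if (∀ i, γ i = 1 → x i = 1) then 1 else 0

lemma eval₂ {n : ℕ} (g : BF n) (x : Fin n → ZMod 2) :
    g x = ∑ γ, anf g γ * mon γ x := by
  rw [← eval_eq_sum_anf g x]
  unfold mon
  rw [Finset.sum_filter]
  apply Finset.sum_congr rfl
  intro γ _
  by_cases h : (∀ i, γ i = 1 → x i = 1) <;> simp [h]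

-- independence / translation layer
lemma anf_indep {n : ℕ} (G : BF n) (j : Fin n) (hj : ∀ x v, G (Function.update x j v) = G x)
    (α : Fin n → ZMod 2) (hα : α j = 1) : anf G α = 0 := by
  unfold anf
  apply sum_flip _ _ j
  · intro z hz
    simp only [Finset.mem_filter, Finset.mem_univ, true_and] at hz ⊢
    intro i hi
    by_cases hij : i = j
    · subst hij; exact hα
    · exact hz i (by rwa [Function.update_of_ne hij] at hi)
  · intro z _
    exact hj z _

lemma update_add {n : ℕ} (z : Fin n → ZMod 2) (j : Fin n) (w : ZMod 2) (c : Fin n → ZMod 2) :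
    (fun i => Function.update z j w i + c i)
      = Function.update (fun i => z i + c i) j (w + c j) := by
  funext i
  by_cases hij : i = j
  · subst hij; simp
  · simp [Function.update_of_ne hij]

lemma mon_update {n : ℕ} (γ : Fin n → ZMod 2) (j : Fin n) (hγ : γ j ≠ 1)
    (y : Fin n → ZMod 2) (v : ZMod 2) : mon γ (Function.update y j v) = mon γ y := by
  unfold mon
  congr 1
  apply propext
  constructor
  · intro h i hi
    have := h i hi
    by_cases hij : i = j
    · exact absurd (hij ▸ hi) hγ
    · rwa [Function.update_of_ne hij] at this
  · intro h i hi
    by_cases hij : i = j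
    · exact absurd (hij ▸ hi) hγ
    · rw [Function.update_of_ne hij]; exact h i hi

lemma anf_translate {n : ℕ} (G : BF n) (c : Fin n → ZMod 2) (b : ℕ)
    (hdeg : ∀ γ, b < wtv γ → anf G γ = 0) (α : Fin n → ZMod 2) (hα : b < wtv α) :
    anf (fun x => G (fun i => x i + c i)) α = 0 := by
  unfold anf
  have : ∀ z : Fin n → ZMod 2, G (fun i => z i + c i) = ∑ γ, anf G γ * mon γ (fun i => z i + c i) :=
    fun z => eval₂ G _
  rw [Finset.sum_congr rfl (fun z _ => this z), Finset.sum_comm]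
  apply Finset.sum_eq_zero
  intro γ _
  by_cases hle : ∀ i, α i = 1 → γ i = 1
  · have : b < wtv γ := lt_of_lt_of_le hα (wtv_le_of_vle hle)
    simp [hdeg γ this]
  · push_neg at hle
    obtain ⟨j, hαj, hγj⟩ := hle
    rw [← Finset.mul_sum, sum_flip _ _ j, mul_zero]
    · intro z hz
      simp only [Finset.mem_filter, Finset.mem_univ, true_and] at hz ⊢
      intro i hi
      by_cases hij : i = j
      · subst hij; exact hαj
      · exact hz i (by rwa [Function.update_of_ne hij] at hi)
    · intro z _
      rw [update_add]
      exact mon_update γ j hγj _ _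

lemma zeroP {n : ℕ} (G : BF n) (S : Finset (Fin n)) (b : ℕ)
    (hind : ∀ j ∈ S, ∀ x v, G (Function.update x j v) = G x)
    (hdeg : ∀ α, b < wtv α → anf G α = 0)
    (hvan : ∀ x : Fin n → ZMod 2, (∀ i ∈ S, x i = 0) → wtv x ≤ b → G x = 0) : G = 0 := by
  apply zero_of_anf
  intro α
  by_cases hmeet : ∃ j ∈ S, α j = 1
  · obtain ⟨j, hjS, hj⟩ := hmeet
    exact anf_indep G j (hind j hjS) α hj
  · push_neg at hmeet
    by_cases hw : wtv α ≤ b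
    · unfold anf
      apply Finset.sum_eq_zero
      intro z hz
      simp only [Finset.mem_filter, Finset.mem_univ, true_and] at hz
      apply hvan
      · intro i hiS
        rcases z2em (z i) with h0 | h1
        · exact h0
        · exact absurd (hz i h1) (by rw [z2ne (α i) (fun h => (hmeet i hiS) h)]; decide)
      · exact le_trans (wtv_le_of_vle hz) hw
    · exact hdeg α (not_le.1 hw)

lemma zeroQ {n : ℕ} (G : BF n) (S : Finset (Fin n)) (b : ℕ)
    (hind : ∀ j ∈ S, ∀ x v, G (Function.update x j v) = G x)
    (hdeg : ∀ α, b < wtv α → anf G α = 0)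
    (hvan : ∀ x : Fin n → ZMod 2,
      ((Finset.univ \ S).filter (fun i => x i = 0)).card ≤ b → G x = 0) : G = 0 := by
  set e : Fin n → ZMod 2 := fun i => if i ∈ S then 0 else 1 with he
  have key : (fun x : Fin n → ZMod 2 => G (fun i => x i + e i)) = 0 := by
    refine zeroP _ S b ?_ ?_ ?_
    · intro j hjS x v
      show G (fun i => Function.update x j v i + e i) = G (fun i => x i + e i)
      rw [update_add]
      exact hind j hjS _ _
    · exact fun α hα => anf_translate G e b hdeg α hα
    · intro x hxS hxw
      show G (fun i => x i + e i) = 0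
      apply hvan
      have hfil : (Finset.univ \ S).filter (fun i => x i + e i = 0)
          = (Finset.univ \ S).filter (fun i => x i = 1) := by
        apply Finset.filter_congr
        intro i hi
        simp only [Finset.mem_sdiff, Finset.mem_univ, true_and] at hi
        rw [he]; simp only [if_neg hi]
        constructor
        · intro h; rcases z2em (x i) with h0 | h1
          · rw [h0] at h; exact absurd h (by decide)
          · exact h1
        · intro h; rw [h]; decide
      rw [hfil]
      refine le_trans ?_ hxw
      unfold wtv
      apply Finset.card_le_card
      intro i hi
      simp only [Finset.mem_filter, Finset.mem_sdiff, Finset.mem_univ, true_and] at hi ⊢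
      exact hi.2
  funext x
  have : G x = G (fun i => (x i + e i) + e i) := by
    congr 1; funext i; rw [add_assoc, z2add, add_zero]
  rw [this]
  exact congrFun key (fun i => x i + e i)

-- append layer
lemma append_decomp {m : ℕ} (u : Fin (m + m) → ZMod 2) :
    Fin.append (fun i => u (Fin.castAdd m i)) (fun i => u (Fin.natAdd m i)) = u := by
  funext i
  refine Fin.addCases (fun j => ?_) (fun j => ?_) i
  · rw [Fin.append_left]
  · rw [Fin.append_right]

lemma vle_append_iff {m : ℕ} {x y α β : Fin m → ZMod 2} :
    (∀ i, Fin.append x y i = 1 → Fin.append α β i = 1)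
      ↔ (∀ i, x i = 1 → α i = 1) ∧ (∀ i, y i = 1 → β i = 1) := by
  constructor
  · intro h
    constructor
    · intro i hi
      have := h (Fin.castAdd m i)
      rw [Fin.append_left, Fin.append_left] at this
      exact this hi
    · intro i hi
      have := h (Fin.natAdd m i)
      rw [Fin.append_right, Fin.append_right] at this
      exact this hi
  · intro ⟨h1, h2⟩ i
    refine Fin.addCases (fun j hj => ?_) (fun j hj => ?_) i
    · rw [Fin.append_left] at hj ⊢; exact h1 j hj
    · rw [Fin.append_right] at hj ⊢; exact h2 j hj

lemma sum_split {m : ℕ} (f : (Fin (m + m) → ZMod 2) → ZMod 2) (α β : Fin m → ZMod 2) :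
    ∑ w ∈ Finset.univ.filter (fun w : Fin (m + m) → ZMod 2 => ∀ i, w i = 1 → Fin.append α β i = 1), f w
      = ∑ z ∈ Finset.univ.filter (fun z : Fin m → ZMod 2 => ∀ i, z i = 1 → α i = 1),
          ∑ y ∈ Finset.univ.filter (fun y : Fin m → ZMod 2 => ∀ i, y i = 1 → β i = 1),
            f (Fin.append z y) := by
  rw [← Finset.sum_product']
  apply Finset.sum_nbij' (i := fun w : Fin (m + m) → ZMod 2 =>
      ((fun i => w (Fin.castAdd m i)), (fun i => w (Fin.natAdd m i))))
    (j := fun p : (Fin m → ZMod 2) × (Fin m → ZMod 2) => Fin.append p.1 p.2)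
  · intro w hw
    simp only [Finset.mem_filter, Finset.mem_univ, true_and, Finset.mem_product] at hw ⊢
    have := (vle_append_iff (x := fun i => w (Fin.castAdd m i)) (y := fun i => w (Fin.natAdd m i))
        (α := α) (β := β)).mp ?_
    · exact this
    · rw [append_decomp]; exact hw
  · intro p hp
    simp only [Finset.mem_filter, Finset.mem_univ, true_and, Finset.mem_product] at hp ⊢
    exact vle_append_iff.mpr hp
  · intro w _
    exact append_decomp w
  · intro p _
    refine Prod.ext (funext fun i => ?_) (funext fun i => ?_)
    · exact Fin.append_left _ _ _
    · exact Fin.append_right _ _ _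
  · intro w _
    rw [append_decomp]

lemma wtv_card {n : ℕ} (x : Fin n → ZMod 2) :
    wtv x = ∑ i, if x i = 1 then 1 else 0 := by
  unfold wtv
  rw [Finset.card_filter]

lemma wtv_append {m : ℕ} (α β : Fin m → ZMod 2) :
    wtv (Fin.append α β) = wtv α + wtv β := by
  rw [wtv_card, wtv_card, wtv_card, Fin.sum_univ_add]
  congr 1
  · apply Finset.sum_congr rfl; intro i _; rw [Fin.append_left]
  · apply Finset.sum_congr rfl; intro i _; rw [Fin.append_right]

-- snoc layer
lemma snoc_self {n : ℕ} (w : Fin (n + 1) → ZMod 2) :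
    Fin.snoc (fun i => w (Fin.castSucc i)) (w (Fin.last n)) = w := by
  funext i
  refine Fin.lastCases ?_ (fun j => ?_) i
  · rw [Fin.snoc_last]
  · rw [Fin.snoc_castSucc]

lemma sum_snoc0 {n : ℕ} (f : (Fin (n + 1) → ZMod 2) → ZMod 2) (α : Fin n → ZMod 2) :
    ∑ w ∈ Finset.univ.filter
        (fun w : Fin (n + 1) → ZMod 2 => ∀ i, w i = 1 → (Fin.snoc α 0 : Fin (n+1) → ZMod 2) i = 1), f w
      = ∑ z ∈ Finset.univ.filter (fun z : Fin n → ZMod 2 => ∀ i, z i = 1 → α i = 1),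
          f (Fin.snoc z 0) := by
  apply Finset.sum_nbij' (i := fun w : Fin (n + 1) → ZMod 2 => fun i => w (Fin.castSucc i))
    (j := fun z : Fin n → ZMod 2 => Fin.snoc z 0)
  · intro w hw
    simp only [Finset.mem_filter, Finset.mem_univ, true_and] at hw ⊢
    intro i hi
    have := hw (Fin.castSucc i) hi
    rwa [Fin.snoc_castSucc] at this
  · intro z hz
    simp only [Finset.mem_filter, Finset.mem_univ, true_and] at hz ⊢
    intro i
    refine Fin.lastCases ?_ (fun j => ?_) i
    · rw [Fin.snoc_last]
      intro h; exact absurd h (by decide)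
    · rw [Fin.snoc_castSucc, Fin.snoc_castSucc]
      exact hz j
  · intro w hw
    simp only [Finset.mem_filter, Finset.mem_univ, true_and] at hw
    have hlast : w (Fin.last n) = 0 := by
      rcases z2em (w (Fin.last n)) with h0 | h1
      · exact h0
      · have := hw (Fin.last n) h1
        rw [Fin.snoc_last] at this
        exact absurd this (by decide)
    rw [← hlast]
    exact snoc_self w
  · intro z _
    funext i
    rw [Fin.snoc_castSucc]
  · intro w hw
    congr 1
    simp only [Finset.mem_filter, Finset.mem_univ, true_and] at hw
    have hlast : w (Fin.last n) = 0 := by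
      rcases z2em (w (Fin.last n)) with h0 | h1
      · exact h0
      · have := hw (Fin.last n) h1
        rw [Fin.snoc_last] at this
        exact absurd this (by decide)
    rw [← hlast]
    exact (snoc_self w).symm

lemma sum_snoc1 {n : ℕ} (f : (Fin (n + 1) → ZMod 2) → ZMod 2) (α : Fin n → ZMod 2) :
    ∑ w ∈ Finset.univ.filter
        (fun w : Fin (n + 1) → ZMod 2 => ∀ i, w i = 1 → (Fin.snoc α 1 : Fin (n+1) → ZMod 2) i = 1), f w
      = ∑ z ∈ Finset.univ.filter (fun z : Fin n → ZMod 2 => ∀ i, z i = 1 → α i = 1),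
          (f (Fin.snoc z 0) + f (Fin.snoc z 1)) := by
  have : ∀ z : Fin n → ZMod 2, f (Fin.snoc z 0) + f (Fin.snoc z 1)
      = ∑ c : ZMod 2, f (Fin.snoc z c) := by
    intro z
    rw [show (Finset.univ : Finset (ZMod 2)) = {0, 1} from rfl]
    rw [Finset.sum_insert (by decide), Finset.sum_singleton]
  rw [Finset.sum_congr rfl (fun z _ => this z), ← Finset.sum_product']
  apply Finset.sum_nbij'
    (i := fun w : Fin (n + 1) → ZMod 2 => ((fun i => w (Fin.castSucc i)), w (Fin.last n)))
    (j := fun p : (Fin n → ZMod 2) × ZMod 2 => Fin.snoc p.1 p.2)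
  · intro w hw
    simp only [Finset.mem_filter, Finset.mem_univ, true_and, Finset.mem_product] at hw ⊢
    refine ⟨?_, trivial⟩
    intro i hi
    have := hw (Fin.castSucc i) hi
    rwa [Fin.snoc_castSucc] at this
  · intro p hp
    simp only [Finset.mem_filter, Finset.mem_univ, true_and, Finset.mem_product] at hp ⊢
    intro i
    refine Fin.lastCases ?_ (fun j => ?_) i
    · rw [Fin.snoc_last, Fin.snoc_last]
      intro _; rfl
    · rw [Fin.snoc_castSucc, Fin.snoc_castSucc]
      exact hp.1 j
  · intro w _
    exact snoc_self w
  · intro p _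
    refine Prod.ext (funext fun i => ?_) ?_
    · simp
    · simp
  · intro w _
    rw [snoc_self]

lemma anf_snoc0 {n : ℕ} (g : BF (n + 1)) (α : Fin n → ZMod 2) :
    anf (fun v => g (Fin.snoc v 0)) α = anf g (Fin.snoc α 0) := by
  unfold anf
  rw [sum_snoc0]

lemma anf_snoc1 {n : ℕ} (g : BF (n + 1)) (α : Fin n → ZMod 2) :
    anf (fun v => g (Fin.snoc v 1)) α = anf g (Fin.snoc α 0) + anf g (Fin.snoc α 1) := by
  have h1 : anf g (Fin.snoc α 1)
      = anf (fun v => g (Fin.snoc v 0)) α + anf (fun v => g (Fin.snoc v 1)) α := by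
    unfold anf
    rw [sum_snoc1, Finset.sum_add_distrib]
  rw [h1, anf_snoc0, ← add_assoc, z2add, zero_add]

lemma wtv_snoc {n : ℕ} (α : Fin n → ZMod 2) (c : ZMod 2) :
    wtv (Fin.snoc α c : Fin (n+1) → ZMod 2) = wtv α + (if c = 1 then 1 else 0) := by
  rw [wtv_card, wtv_card, Fin.sum_univ_castSucc]
  congr 1
  · apply Finset.sum_congr rfl; intro i _; rw [Fin.snoc_castSucc]
  · rw [Fin.snoc_last]

lemma deg_snoc_le {n : ℕ} (g : BF (n + 1)) (c : ZMod 2) :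
    degBF (fun v => g (Fin.snoc v c)) ≤ degBF g := by
  apply Finset.sup_le
  intro α hα
  simp only [Finset.mem_filter, Finset.mem_univ, true_and] at hα
  have key : ∃ c' : ZMod 2, anf g (Fin.snoc α c') ≠ 0 := by
    rcases z2em c with h0 | h1
    · subst h0
      rw [anf_snoc0] at hα
      exact ⟨0, hα⟩
    · subst h1
      rw [anf_snoc1] at hα
      by_cases h : anf g (Fin.snoc α 0) = 0
      · rw [h, zero_add] at hα
        exact ⟨1, hα⟩
      · exact ⟨0, h⟩
  obtain ⟨c', hc'⟩ := key
  have hmem : (Fin.snoc α c' : Fin (n+1) → ZMod 2)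
      ∈ Finset.univ.filter (fun α => anf g α ≠ 0) := by simp [hc']
  have := Finset.le_sup (f := wtv) hmem
  rw [wtv_snoc] at this
  exact le_trans (Nat.le_add_right _ _) this

-- even layer
def hpart {m : ℕ} (g : BF (m + m)) (β : Fin m → ZMod 2) : BF m :=
  fun x => anf (fun y => g (Fin.append x y)) β

lemma hpart_anf {m : ℕ} (g : BF (m + m)) (β γ : Fin m → ZMod 2) :
    anf (hpart g β) γ = anf g (Fin.append γ β) := by
  unfold hpart anf
  exact (sum_split g γ β).symm

lemma E_append {m : ℕ} (a b : Fin m → ZMod 2) :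
    MMrevEven m (Fin.append a b) = ip (revPerm m a) b + majF m a := by
  unfold MMrevEven
  have h1 : (fun i => Fin.append a b (Fin.castAdd m i)) = a :=
    funext fun i => Fin.append_left a b i
  have h2 : (fun i => Fin.append a b (Fin.natAdd m i)) = b :=
    funext fun i => Fin.append_right a b i
  rw [h1, h2]

theorem EvenMain (m : ℕ) (g : BF (m + m)) (hg : g ≠ 0)
    (hann : (∀ u, g u * MMrevEven m u = 0) ∨ (∀ u, g u * (1 + MMrevEven m u) = 0)) :
    (m + 1) / 2 ≤ degBF g := by
  by_contra hcon
  push_neg at hcon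
  -- choose minimal β
  have hex : ∃ β, hpart g β ≠ 0 := by
    by_contra hc
    push_neg at hc
    apply hg
    funext u
    have hu : g u = g (Fin.append (fun i => u (Fin.castAdd m i)) (fun i => u (Fin.natAdd m i))) := by
      rw [append_decomp]
    rw [hu]
    have hz := zero_of_anf (fun y => g (Fin.append (fun i => u (Fin.castAdd m i)) y))
      (fun β => congrFun (hc β) (fun i => u (Fin.castAdd m i)))
    exact congrFun hz (fun i => u (Fin.natAdd m i))
  obtain ⟨β₀, hβ₀⟩ := hex
  obtain ⟨βv, hβmem, hβmin⟩ := Finset.exists_min_image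
    (Finset.univ.filter fun β : Fin m → ZMod 2 => hpart g β ≠ 0) wtv ⟨β₀, by simp [hβ₀]⟩
  simp only [Finset.mem_filter, Finset.mem_univ, true_and] at hβmem
  have hβmin' : ∀ β', hpart g β' ≠ 0 → wtv βv ≤ wtv β' := by
    intro β' h
    exact hβmin β' (by simp [h])
  -- minimality consequences
  have hGrepr : ∀ x, g (Fin.append x βv) = hpart g βv x := by
    intro x
    have he := eval_eq_sum_anf (fun y => g (Fin.append x y)) βv
    rw [← he]
    rw [Finset.sum_eq_single_of_mem βv (by simp)]
    · rfl
    · intro β hβ hne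
      simp only [Finset.mem_filter, Finset.mem_univ, true_and] at hβ
      by_contra hc2
      have hne0 : hpart g β ≠ 0 := by
        intro h0
        exact hc2 (congrFun h0 x)
      have hge := hβmin' β hne0
      have hle : wtv β ≤ wtv βv := wtv_le_of_vle hβ
      exact hne (vle_eq_of_wtv hβ hge)
  have hGdeg : ∀ γ, degBF g < wtv γ + wtv βv → anf (hpart g βv) γ = 0 := by
    intro γ hγ
    rw [hpart_anf]
    apply anf_eq_zero_of_deg
    rw [wtv_append]
    omega
  -- if wtv βv > degBF g, contradiction
  rcases le_or_gt (wtv βv) (degBF g) with hk | hk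
  swap
  · exact hβmem (zero_of_anf _ (fun γ => hGdeg γ (by omega)))
  -- choose x₀
  have hx₀ : ∃ x₀, hpart g βv x₀ ≠ 0 := by
    by_contra hc
    push_neg at hc
    exact hβmem (funext hc)
  obtain ⟨x₀, hx₀⟩ := hx₀
  -- the set S and the restricted function
  set S : Finset (Fin m) := (Finset.univ.filter fun i => βv i = 1).image Fin.rev with hS
  have hSmem : ∀ j, j ∈ S ↔ βv j.rev = 1 := by
    intro j
    rw [hS]
    simp only [Finset.mem_image, Finset.mem_filter, Finset.mem_univ, true_and]
    constructor
    · rintro ⟨i, hi, rfl⟩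
      rwa [Fin.rev_rev]
    · intro h
      exact ⟨j.rev, h, Fin.rev_rev j⟩
  have hcardS : S.card = wtv βv := by
    rw [hS]
    exact Finset.card_image_of_injective _ Fin.rev_injective
  set pat : (Fin m → ZMod 2) → (Fin m → ZMod 2) := fun x i => if i ∈ S then x₀ i else x i
    with hpat
  set G' : BF m := fun x => hpart g βv (pat x) with hG'
  have hpatx₀ : pat x₀ = x₀ := by
    funext i
    rw [hpat]
    simp only [ite_self]
  have hG'ne : G' ≠ 0 := by
    intro h0
    have := congrFun h0 x₀
    rw [hG'] at this
    simp only at this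
    rw [hpatx₀] at this
    exact hx₀ this
  have hind : ∀ j ∈ S, ∀ x v, G' (Function.update x j v) = G' x := by
    intro j hjS x v
    rw [hG']
    simp only
    congr 1
    funext i
    rw [hpat]
    simp only
    by_cases hiS : i ∈ S
    · rw [if_pos hiS, if_pos hiS]
    · rw [if_neg hiS, if_neg hiS, Function.update_of_ne (fun h => hiS (by rw [h]; exact hjS))]
  have hG'deg : ∀ α, degBF g - wtv βv < wtv α → anf G' α = 0 := by
    intro α hα
    by_cases hmeet : ∃ j ∈ S, α j = 1
    · obtain ⟨j, hjS, hj⟩ := hmeet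
      exact anf_indep G' j (hind j hjS) α hj
    · push_neg at hmeet
      have heq : anf G' α
          = anf (fun x => hpart g βv (fun i => x i + (if i ∈ S then x₀ i else 0))) α := by
        unfold anf
        apply Finset.sum_congr rfl
        intro z hz
        simp only [Finset.mem_filter, Finset.mem_univ, true_and] at hz
        rw [hG']
        simp only
        congr 1
        funext i
        rw [hpat]
        simp only
        by_cases hiS : i ∈ S
        · rw [if_pos hiS, if_pos hiS]
          have hz0 : z i = 0 := by
            rcases z2em (z i) with h0 | h1
            · exact h0
            · exact absurd (hz i h1) (by rw [z2ne (α i) (hmeet i hiS)]; decide)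
          rw [hz0, zero_add]
        · rw [if_neg hiS, if_neg hiS, add_zero]
      rw [heq]
      exact anf_translate (hpart g βv) _ (degBF g - wtv βv)
        (fun γ hγ => hGdeg γ (by omega)) α hα
  -- annihilation facts
  set εv : ZMod 2 := ip (revPerm m x₀) βv with hεv
  have hip : ∀ x, ip (revPerm m (pat x)) βv = εv := by
    intro x
    rw [hεv]
    unfold ip revPerm
    apply Finset.sum_congr rfl
    intro i _
    rcases z2em (βv i) with h0 | h1
    · rw [h0, mul_zero, mul_zero]
    · have : i.rev ∈ S := by
        rw [hSmem]
        rwa [Fin.rev_rev]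
      rw [hpat]
      simp only [if_pos this]
  have hannG' : (∀ x, G' x * (εv + majF m (pat x)) = 0)
      ∨ (∀ x, G' x * (1 + (εv + majF m (pat x))) = 0) := by
    rcases hann with hA | hB
    · left
      intro x
      have := hA (Fin.append (pat x) βv)
      rw [E_append, hGrepr, hip] at this
      exact this
    · right
      intro x
      have := hB (Fin.append (pat x) βv)
      rw [E_append, hGrepr, hip] at this
      exact this
  -- weight bookkeeping
  set sOnes : ℕ := (S.filter fun i => x₀ i = 1).card with hsOnes
  have hsk : sOnes ≤ wtv βv := by
    rw [hsOnes, ← hcardS]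
    exact Finset.card_filter_le _ _
  have hwtv_pat : ∀ x, wtv (pat x)
      = sOnes + ((Finset.univ \ S).filter fun i => x i = 1).card := by
    intro x
    rw [wtv_card]
    have : ∀ i : Fin m, (if pat x i = 1 then (1:ℕ) else 0)
        = if i ∈ S then (if x₀ i = 1 then 1 else 0) else (if x i = 1 then 1 else 0) := by
      intro i
      rw [hpat]
      by_cases hiS : i ∈ S
      · simp only [if_pos hiS]
      · simp only [if_neg hiS]
    rw [Finset.sum_congr rfl (fun i _ => this i), Finset.sum_ite]
    congr 1
    · rw [← Finset.card_filter]
      congr 1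
      ext i
      simp
    · rw [← Finset.card_filter]
      congr 1
      ext i
      simp [Finset.mem_sdiff]
  have hzw : ∀ x : Fin m → ZMod 2,
      ((Finset.univ \ S).filter fun i => x i = 1).card
        + ((Finset.univ \ S).filter fun i => x i = 0).card = m - wtv βv := by
    intro x
    have h1 : ((Finset.univ \ S).filter fun i => x i = 0)
        = ((Finset.univ \ S).filter fun i => ¬ (x i = 1)) := by
      apply Finset.filter_congr
      intro i _
      constructor
      · intro h; rw [h]; decide
      · intro h; exact z2ne _ h
    rw [h1, Finset.card_filter_add_card_filter_not]
    rw [Finset.card_sdiff_of_subset (Finset.subset_univ S), hcardS, Finset.card_univ, Fintype.card_fin]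
  have hwx : ∀ x : Fin m → ZMod 2, (∀ i ∈ S, x i = 0) →
      ((Finset.univ \ S).filter fun i => x i = 1).card = wtv x := by
    intro x hxS
    unfold wtv
    congr 1
    ext i
    simp only [Finset.mem_filter, Finset.mem_sdiff, Finset.mem_univ, true_and]
    constructor
    · intro h; exact h.2
    · intro h
      refine ⟨fun hiS => ?_, h⟩
      rw [hxS i hiS] at h
      exact absurd h (by decide)
  -- final case analysis
  have hG'zero : G' = 0 := by
    rcases hannG' with hA | hB <;> rcases z2em εv with hε | hε
    · -- case A, ε = 0 : vanish on high side, use zeroQ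
      apply zeroQ G' S (degBF g - wtv βv) hind hG'deg
      intro x hx
      have hmaj : majF m (pat x) = 1 := by
        unfold majF
        rw [if_pos]
        rw [hwtv_pat x]
        have := hzw x
        omega
      have := hA x
      rw [hε, hmaj, zero_add, mul_one] at this
      exact this
    · -- case A, ε = 1 : vanish on low side, use zeroP
      apply zeroP G' S (degBF g - wtv βv) hind hG'deg
      intro x hxS hxw
      have hmaj : majF m (pat x) = 0 := by
        unfold majF
        rw [if_neg]
        rw [hwtv_pat x, hwx x hxS]
        omega
      have := hA x
      rw [hε, hmaj, add_zero, mul_one] at this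
      exact this
    · -- case B, ε = 0 : vanish on low side, use zeroP
      apply zeroP G' S (degBF g - wtv βv) hind hG'deg
      intro x hxS hxw
      have hmaj : majF m (pat x) = 0 := by
        unfold majF
        rw [if_neg]
        rw [hwtv_pat x, hwx x hxS]
        omega
      have := hB x
      rw [hε, hmaj] at this
      rw [show (1 : ZMod 2) + (0 + 0) = 1 by decide, mul_one] at this
      exact this
    · -- case B, ε = 1 : vanish on high side, use zeroQ
      apply zeroQ G' S (degBF g - wtv βv) hind hG'deg
      intro x hx
      have hmaj : majF m (pat x) = 1 := by
        unfold majF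
        rw [if_pos]
        rw [hwtv_pat x]
        have := hzw x
        omega
      have := hB x
      rw [hε, hmaj] at this
      rw [show (1 : ZMod 2) + (1 + 1) = 1 by decide, mul_one] at this
      exact this
  exact hG'ne hG'zero

-- odd layer
lemma z2cancel (a : ZMod 2) : (1 : ZMod 2) + (1 + a) = a := by
  rw [← add_assoc, show (1:ZMod 2) + 1 = 0 by decide, zero_add]

lemma O_snoc {m : ℕ} (v : Fin (m + m) → ZMod 2) (c : ZMod 2) :
    MMrevOdd m (Fin.snoc v c) = c + MMrevEven m v := by
  unfold MMrevOdd
  have h1 : (Fin.snoc v c : Fin (m+m+1) → ZMod 2) (Fin.last (m + m)) = c := Fin.snoc_last _ _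
  have h2 : (fun i => (Fin.snoc v c : Fin (m+m+1) → ZMod 2) (Fin.castSucc i)) = v :=
    funext fun i => Fin.snoc_castSucc _ _ _
  rw [h1, h2]

theorem OddMain (m : ℕ) (g : BF (m + m + 1)) (hg : g ≠ 0)
    (hann : (∀ u, g u * MMrevOdd m u = 0) ∨ (∀ u, g u * (1 + MMrevOdd m u) = 0)) :
    (m + 1) / 2 ≤ degBF g := by
  have hg01 : (fun v : Fin (m+m) → ZMod 2 => g (Fin.snoc v 0)) ≠ 0
      ∨ (fun v : Fin (m+m) → ZMod 2 => g (Fin.snoc v 1)) ≠ 0 := by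
    by_contra hc
    push_neg at hc
    obtain ⟨h0, h1⟩ := hc
    apply hg
    funext u
    rw [← snoc_self u]
    rcases z2em (u (Fin.last (m + m))) with hl | hl <;> rw [hl]
    · exact congrFun h0 _
    · exact congrFun h1 _
  have key : ∀ c : ZMod 2, (fun v : Fin (m+m) → ZMod 2 => g (Fin.snoc v c)) ≠ 0 →
      (m + 1) / 2 ≤ degBF g := by
    intro c hne
    have hb := EvenMain m (fun v : Fin (m+m) → ZMod 2 => g (Fin.snoc v c)) hne ?_
    · exact le_trans hb (deg_snoc_le g c)
    · rcases hann with hA | hB <;> rcases z2em c with hc0 | hc1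
      · subst hc0
        left
        intro v
        have := hA (Fin.snoc v 0)
        rw [O_snoc, zero_add] at this
        exact this
      · subst hc1
        right
        intro v
        have := hA (Fin.snoc v 1)
        rw [O_snoc] at this
        exact this
      · subst hc0
        right
        intro v
        have := hB (Fin.snoc v 0)
        rw [O_snoc, zero_add] at this
        exact this
      · subst hc1
        left
        intro v
        have := hB (Fin.snoc v 1)
        rw [O_snoc, z2cancel] at this
        exact this
  rcases hg01 with h | h
  · exact key 0 h
  · exact key 1 h

-- AI wrappers
lemma AIset_nonempty {n : ℕ} (f : BF n) :
    {d : ℕ | ∃ g : BF n, g ≠ 0 ∧ degBF g = d ∧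
      ((∀ x, g x * f x = 0) ∨ (∀ x, g x * (1 + f x) = 0))}.Nonempty := by
  by_cases h : (fun x : Fin n → ZMod 2 => 1 + f x) = 0
  · refine ⟨degBF (fun _ => 1), fun _ => 1, ?_, rfl, Or.inr ?_⟩
    · intro h0
      have h1 : (1 : ZMod 2) = 0 := congrFun h0 (fun _ => 0)
      exact absurd h1 (by decide)
    · intro x
      have h2 : 1 + f x = (0 : ZMod 2) := congrFun h x
      show (1 : ZMod 2) * (1 + f x) = 0
      rw [h2, mul_zero]
  · refine ⟨degBF (fun x => 1 + f x), (fun x => 1 + f x), h, rfl, Or.inl ?_⟩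
    intro x
    have hz : ∀ a : ZMod 2, (1 + a) * a = 0 := by decide
    exact hz (f x)

lemma AI_ge {n : ℕ} (f : BF n) (b : ℕ)
    (h : ∀ g : BF n, g ≠ 0 → ((∀ x, g x * f x = 0) ∨ (∀ x, g x * (1 + f x) = 0)) → b ≤ degBF g) :
    b ≤ AI f := by
  unfold AI
  apply le_csInf (AIset_nonempty f)
  rintro d ⟨g, hg, hdeg, hann⟩
  rw [← hdeg]
  exact h g hg hann


/-- For n ≥ 4: if n = 2m is even then AI((Maj,rev)-MM_n) ≥ ⌈n/4⌉ = ⌈m/2⌉, and if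
n = 2m+1 is odd then AI((Maj,rev)-MM_n) ≥ ⌈(n−1)/4⌉ = ⌈m/2⌉. -/
theorem AI_MMrev (m : ℕ) :
    (4 ≤ m + m → (m + 1) / 2 ≤ AI (MMrevEven m)) ∧
    (4 ≤ m + m + 1 → (m + 1) / 2 ≤ AI (MMrevOdd m)) := by
  constructor
  · intro _
    exact AI_ge _ _ (fun g hg hann => EvenMain m g hg hann)
  · intro _
    exact AI_ge _ _ (fun g hg hann => OddMain m g hg hann)
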